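/- Fix M ≥ 1, L ≥ 1 and matrices Z₁,…,Z_{L−1} with Z_l ∈ ℝ^{P_l×M}, and let σ : ℝ^{M×M} → ℝ^{M×M} be continuously differentiable. For c > 0 define recursively B⁰_c = I_M and B^l_c = B^{l−1}_c(I_M + (1/c)σ((B^{l−1}_c)ᵀ Z_lᵀ Z_l B^{l−1}_c)) for 1 ≤ l ≤ L−1. Then for every 1 ≤ l ≤ L−1, the limit lim_{c→∞} c·(B^l_c − I_M) exists and equals A^l := Σ_{l'=1}^{l} σ(Z_{l'}ᵀ Z_{l'}). -/

import Mathlib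

open Matrix

attribute [local instance] Matrix.normedAddCommGroup Matrix.normedSpace

/-- Rescaled mixing matrices with skip strength `c`:
`B⁰_c = I_M`, `B^l_c = B^{l−1}_c(I_M + (1/c)·σ((B^{l−1}_c)ᵀ Z_lᵀ Z_l B^{l−1}_c))`. -/
noncomputable def mixBskip (M : ℕ) (c : ℝ)
    (σ : Matrix (Fin M) (Fin M) ℝ → Matrix (Fin M) (Fin M) ℝ)
    (P : ℕ → ℕ) (Z : (l : ℕ) → Matrix (Fin (P l)) (Fin M) ℝ) :
    ℕ → Matrix (Fin M) (Fin M) ℝ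
  | 0 => 1
  | l + 1 =>
      mixBskip M c σ P Z l *
        ((1 : Matrix (Fin M) (Fin M) ℝ) +
          c⁻¹ • σ ((mixBskip M c σ P Z l)ᵀ * (Z (l + 1))ᵀ * Z (l + 1) * mixBskip M c σ P Z l))

lemma mixB_aux (M : ℕ)
    (σ : Matrix (Fin M) (Fin M) ℝ → Matrix (Fin M) (Fin M) ℝ) (hσ : Continuous σ)
    (P : ℕ → ℕ) (Z : (l : ℕ) → Matrix (Fin (P l)) (Fin M) ℝ) :
    ∀ l, Filter.Tendsto (fun c : ℝ => c • (mixBskip M c σ P Z l - 1)) Filter.atTop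
        (nhds (∑ l' ∈ Finset.Icc 1 l, σ ((Z l')ᵀ * Z l'))) := by
  intro l
  induction l with
  | zero => simp [mixBskip, tendsto_const_nhds]
  | succ l ih =>
    set B : ℝ → Matrix (Fin M) (Fin M) ℝ := fun c => mixBskip M c σ P Z l with hBdef
    have hB : Filter.Tendsto B Filter.atTop (nhds 1) := by
      have h0 : Filter.Tendsto (fun c : ℝ => (1 : Matrix (Fin M) (Fin M) ℝ) +
          c⁻¹ • (c • (B c - 1))) Filter.atTop (nhds (1 + (0:ℝ) •
          (∑ l' ∈ Finset.Icc 1 l, σ ((Z l')ᵀ * Z l')))) :=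
        tendsto_const_nhds.add (tendsto_inv_atTop_zero.smul ih)
      rw [zero_smul, add_zero] at h0
      refine h0.congr' ?_
      filter_upwards [Filter.eventually_ge_atTop (1:ℝ)] with c hc
      rw [smul_smul, inv_mul_cancel₀ (by linarith), one_smul]
      abel
    have hS : Filter.Tendsto
        (fun c : ℝ => σ ((B c)ᵀ * (Z (l + 1))ᵀ * Z (l + 1) * B c))
        Filter.atTop (nhds (σ ((Z (l + 1))ᵀ * Z (l + 1)))) := by
      have hcont : Continuous (fun X : Matrix (Fin M) (Fin M) ℝ =>
          σ (Xᵀ * (Z (l + 1))ᵀ * Z (l + 1) * X)) := by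
        refine hσ.comp ?_
        exact ((Continuous.matrix_mul ((continuous_id.matrix_transpose).matrix_mul
          continuous_const) continuous_const)).matrix_mul continuous_id
      have := (hcont.tendsto 1).comp hB
      simpa [Function.comp_def] using this
    have hmain : Filter.Tendsto (fun c : ℝ => c • (B c - 1) +
        B c * σ ((B c)ᵀ * (Z (l + 1))ᵀ * Z (l + 1) * B c)) Filter.atTop
        (nhds ((∑ l' ∈ Finset.Icc 1 l, σ ((Z l')ᵀ * Z l')) +
          σ ((Z (l + 1))ᵀ * Z (l + 1)))) := by
      refine ih.add ?_
      simpa using hB.mul hS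
    rw [Finset.sum_Icc_succ_top (Nat.le_add_left 1 l)] at *
    refine hmain.congr' ?_
    filter_upwards [Filter.eventually_ge_atTop (1:ℝ)] with c hc
    have hc0 : c ≠ 0 := by linarith
    show c • (B c - 1) + _ = c • (mixBskip M c σ P Z (l+1) - 1)
    rw [show mixBskip M c σ P Z (l+1) = B c * (1 + c⁻¹ •
      σ ((B c)ᵀ * (Z (l + 1))ᵀ * Z (l + 1) * B c)) from rfl]
    rw [mul_add, mul_one, Matrix.mul_smul, add_sub_right_comm, smul_add,
      smul_smul, mul_inv_cancel₀ hc0, one_smul]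

/-- Strong-skip-connection expansion: for every `1 ≤ l ≤ L−1`,
`lim_{c→∞} c·(B^l_c − I_M) = Σ_{l'=1}^{l} σ(Z_{l'}ᵀ Z_{l'})`. -/
theorem mixB_strong_skip_limit (M L : ℕ) (hM : 1 ≤ M) (hL : 1 ≤ L)
    (σ : Matrix (Fin M) (Fin M) ℝ → Matrix (Fin M) (Fin M) ℝ) (hσ : ContDiff ℝ 1 σ)
    (P : ℕ → ℕ) (Z : (l : ℕ) → Matrix (Fin (P l)) (Fin M) ℝ) :
    ∀ l, 1 ≤ l → l ≤ L - 1 →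
      Filter.Tendsto (fun c : ℝ => c • (mixBskip M c σ P Z l - 1)) Filter.atTop
        (nhds (∑ l' ∈ Finset.Icc 1 l, σ ((Z l')ᵀ * Z l'))) := by
  intro l _ _
  exact mixB_aux M σ hσ.continuous P Z l
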